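/- Let $g \in \mathrm{SL}_n(\mathbb{R})$ be unipotent, and write $g = k_1 e^X k_2$ with $k_1, k_2 \in \mathrm{SO}(n)$ and $X$ a real diagonal traceless matrix (Cartan decomposition). Then $\|X\| \ge \tfrac{1}{2}\log\left(1 + \tfrac{1}{n}\|g - I_n\|^2\right)$, where $\|A\|^2 = \sum_{i,j} A_{ij}^2$ is the Frobenius norm. -/

import Mathlib

open scoped BigOperators

/-- Frobenius norm of a real square matrix. -/
noncomputable def frobNorm {n : ℕ} (A : Matrix (Fin n) (Fin n) ℝ) : ℝ :=
  Real.sqrt (∑ i, ∑ j, (A i j) ^ 2)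

/-- For a unipotent `g ∈ SL(n,ℝ)` with Cartan decomposition `g = k₁ e^X k₂`
(`k₁, k₂ ∈ SO(n)`, `X` diagonal traceless), one has
`‖X‖ ≥ (1/2) log(1 + ‖g - 1‖²/n)`. -/
theorem stmt_0 (n : ℕ) (hn : 0 < n) (g k₁ k₂ X : Matrix (Fin n) (Fin n) ℝ)
    (hg_det : g.det = 1) (hg_unip : (g - 1) ^ n = 0)
    (hk₁_orth : k₁.transpose * k₁ = 1) (hk₁_det : k₁.det = 1)
    (hk₂_orth : k₂.transpose * k₂ = 1) (hk₂_det : k₂.det = 1)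
    (hX_diag : X.IsDiag) (hX_tr : X.trace = 0)
    (hCartan : g = k₁ * NormedSpace.exp X * k₂) :
    (1 / 2) * Real.log (1 + (1 / n) * (frobNorm (g - 1)) ^ 2) ≤ frobNorm X := by
  have hnR : (0:ℝ) < n := by exact_mod_cast hn
  set a : Fin n → ℝ := X.diag with ha
  have hXd : X = Matrix.diagonal a := hX_diag.diagonal_diag.symm
  -- exponential of a diagonal matrix
  have hE : NormedSpace.exp X = Matrix.diagonal (fun i => Real.exp (a i)) := by
    conv_lhs => rw [hXd]
    rw [Matrix.exp_diagonal, Pi.exp_def]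
    simp [Real.exp_eq_exp_ℝ]
  set E : Matrix (Fin n) (Fin n) ℝ := Matrix.diagonal (fun i => Real.exp (a i)) with hEdef
  -- trace of g is n (unipotent)
  have htrg : g.trace = n := by
    have h2 : IsNilpotent ((g - 1).trace) :=
      Matrix.isNilpotent_trace_of_isNilpotent ⟨n, hg_unip⟩
    have h3 : (g - 1).trace = 0 := h2.eq_zero
    rw [Matrix.trace_sub, Matrix.trace_one, sub_eq_zero] at h3
    simpa using h3
  -- trace of gᵀ * g
  have hk₁' : k₁ * k₁.transpose = 1 := mul_eq_one_comm.mp hk₁_orth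
  have hk₂' : k₂ * k₂.transpose = 1 := mul_eq_one_comm.mp hk₂_orth
  have hEE : E * E = Matrix.diagonal (fun i => Real.exp (2 * a i)) := by
    have hfun : (fun i => Real.exp (a i) * Real.exp (a i)) = fun i => Real.exp (2 * a i) := by
      funext i; rw [← Real.exp_add, two_mul]
    rw [hEdef, Matrix.diagonal_mul_diagonal, hfun]
  set S : ℝ := ∑ i, Real.exp (2 * a i) with hSdef
  have hEt : E.transpose = E := Matrix.diagonal_transpose _
  have hgg : g.transpose * g = k₂.transpose * (E * E) * k₂ := by
    rw [hCartan, hE]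
    calc (k₁ * E * k₂).transpose * (k₁ * E * k₂)
        = k₂.transpose * (E * ((k₁.transpose * k₁) * (E * k₂))) := by
          simp [Matrix.transpose_mul, hEt, Matrix.mul_assoc]
      _ = k₂.transpose * (E * E) * k₂ := by rw [hk₁_orth]; simp [Matrix.mul_assoc]
  have htrgg : (g.transpose * g).trace = S := by
    rw [hgg, Matrix.trace_mul_comm, ← Matrix.mul_assoc, hk₂', Matrix.one_mul, hEE,
      Matrix.trace_diagonal]
  -- Frobenius norm squared of g - 1
  have hfrosq : ∀ A : Matrix (Fin n) (Fin n) ℝ, (frobNorm A) ^ 2 = ∑ i, ∑ j, (A i j) ^ 2 := by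
    intro A
    exact Real.sq_sqrt (by positivity)
  have hAAt : ∀ A : Matrix (Fin n) (Fin n) ℝ,
      (A.transpose * A).trace = ∑ i, ∑ j, (A i j) ^ 2 := by
    intro A
    rw [Matrix.trace]
    rw [Finset.sum_comm]
    apply Finset.sum_congr rfl
    intro i _
    simp [Matrix.mul_apply, Matrix.diag, Matrix.transpose_apply, sq]
  have hfro : (frobNorm (g - 1)) ^ 2 = S - n := by
    rw [hfrosq, ← hAAt]
    have hexp : (g - 1).transpose * (g - 1)
        = g.transpose * g - g.transpose - g + 1 := by
      simp [Matrix.transpose_sub, sub_mul, mul_sub, Matrix.transpose_one]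
      noncomm_ring
    rw [hexp, Matrix.trace_add, Matrix.trace_sub, Matrix.trace_sub, htrgg,
      Matrix.trace_transpose, htrg, Matrix.trace_one]
    simp
  -- rewrite the log argument
  have harg : 1 + (1 / (n:ℝ)) * (frobNorm (g - 1)) ^ 2 = (1 / n) * S := by
    rw [hfro]; field_simp; ring
  rw [harg]
  -- bound: each a i ≤ frobNorm X
  set N : ℝ := frobNorm X with hNdef
  have hN0 : 0 ≤ N := Real.sqrt_nonneg _
  have hai : ∀ i, a i ≤ N := by
    intro i
    have h1 : a i ≤ |a i| := le_abs_self _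
    have h2 : |a i| = Real.sqrt ((a i) ^ 2) := (Real.sqrt_sq_eq_abs _).symm
    have h3 : (a i) ^ 2 ≤ ∑ i', ∑ j, (X i' j) ^ 2 := by
      calc (a i) ^ 2 = (X i i) ^ 2 := rfl
        _ ≤ ∑ j, (X i j) ^ 2 :=
            Finset.single_le_sum (fun j _ => sq_nonneg (X i j)) (Finset.mem_univ i)
        _ ≤ ∑ i', ∑ j, (X i' j) ^ 2 :=
            Finset.single_le_sum (fun i' _ => Finset.sum_nonneg fun j _ => sq_nonneg (X i' j))
              (Finset.mem_univ i)
    calc a i ≤ |a i| := h1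
      _ = Real.sqrt ((a i) ^ 2) := h2
      _ ≤ N := Real.sqrt_le_sqrt h3
  have hSle : S ≤ n * Real.exp (2 * N) := by
    calc S ≤ ∑ _i : Fin n, Real.exp (2 * N) :=
          Finset.sum_le_sum fun i _ => Real.exp_le_exp.mpr (by linarith [hai i])
      _ = n * Real.exp (2 * N) := by simp [Finset.sum_const, mul_comm]
  have hSpos : 0 < S := Finset.sum_pos (fun i _ => Real.exp_pos _)
    (Finset.univ_nonempty_iff.mpr ⟨⟨0, hn⟩⟩)
  have hargle : (1 / (n:ℝ)) * S ≤ Real.exp (2 * N) := by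
    rw [div_mul_eq_mul_div, one_mul, div_le_iff₀ hnR]
    linarith [hSle]
  have hlog : Real.log ((1 / (n:ℝ)) * S) ≤ 2 * N := by
    calc Real.log ((1 / (n:ℝ)) * S) ≤ Real.log (Real.exp (2 * N)) :=
          Real.log_le_log (mul_pos (by positivity) hSpos) hargle
      _ = 2 * N := Real.log_exp _
  linarith
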